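/- Let R be a commutative ring and s ∈ R. An R-module C satisfies Ext¹_R(R[s⁻¹], C) = 0 if and only if for every sequence of elements a₀, a₁, a₂, … ∈ C the infinite system of equations bₙ − s·bₙ₊₁ = aₙ (n ≥ 0) has a solution b₀, b₁, b₂, … ∈ C. -/

import Mathlib

open CategoryTheory Opposite

noncomputable section Ext1Aux

variable (R : Type) [CommRing R] (s : R)

namespace Ext1Aux

/-- The differential `eₙ ↦ eₙ - s·eₙ₊₁` on the free module `R^(ℕ)`. -/
def dl : (ℕ →₀ R) →ₗ[R] (ℕ →₀ R) :=
  LinearMap.id - s • Finsupp.lmapDomain R R Nat.succ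

/-- The augmentation `eₙ ↦ 1/sⁿ` to the localization. -/
def εl : (ℕ →₀ R) →ₗ[R] Localization.Away s :=
  Finsupp.lsum R fun n => LinearMap.toSpanSingleton R _
    (Localization.mk 1 ⟨s ^ n, n, rfl⟩)

lemma dl_single (n : ℕ) (r : R) :
    dl R s (Finsupp.single n r) = Finsupp.single n r - Finsupp.single (n + 1) (s * r) := by
  simp [dl, Finsupp.lmapDomain_apply, Finsupp.mapDomain_single, Finsupp.smul_single, Nat.succ_eq_add_one]

lemma dl_apply_zero (c : ℕ →₀ R) : dl R s c 0 = c 0 := by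
  simp [dl, Finsupp.lmapDomain_apply]
  rw [Finsupp.mapDomain_notin_range]
  · simp
  · rintro ⟨m, hm⟩; exact Nat.succ_ne_zero m hm

lemma dl_apply_succ (c : ℕ →₀ R) (n : ℕ) : dl R s c (n + 1) = c (n + 1) - s * c n := by
  simp [dl, Finsupp.lmapDomain_apply]
  rw [Finsupp.mapDomain_apply Nat.succ_injective]

lemma dl_injective : Function.Injective (dl R s) := by
  rw [injective_iff_map_eq_zero]
  intro c hc
  ext n
  induction n with
  | zero =>
    have := dl_apply_zero R s c
    rw [hc] at this
    simpa using this.symm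
  | succ n ih =>
    have := dl_apply_succ R s c n
    rw [hc, ih] at this
    simpa using this.symm

lemma εl_single (n : ℕ) (r : R) :
    εl R s (Finsupp.single n r) = Localization.mk r (⟨s ^ n, n, rfl⟩ : Submonoid.powers s) := by
  simp [εl, LinearMap.toSpanSingleton_apply, Localization.smul_mk]

lemma εl_surjective : Function.Surjective (εl R s) := by
  intro x
  induction x using Localization.induction_on with
  | H y =>
    obtain ⟨r, m⟩ := y
    obtain ⟨n, hn⟩ := m.2
    refine ⟨Finsupp.single n r, ?_⟩
    rw [εl_single]
    congr 1
    exact Subtype.ext hn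

lemma εl_dl (c : ℕ →₀ R) : εl R s (dl R s c) = 0 := by
  induction c using Finsupp.induction_linear with
  | zero => simp
  | add f g hf hg => simp [hf, hg]
  | single n r =>
    rw [dl_single, map_sub, εl_single, εl_single]
    rw [sub_eq_zero, Localization.mk_eq_mk_iff]
    apply Localization.r_of_eq
    simp [pow_succ]; ring

/-- telescoping: `r·eₙ - r·sᵏ·eₙ₊ₖ` is in the image of `dl`. -/
lemma telescope (r : R) (n k : ℕ) :
    Finsupp.single n r - Finsupp.single (n + k) (s ^ k * r) ∈ LinearMap.range (dl R s) := by
  induction k with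
  | zero => simp
  | succ k ih =>
    have h2 : dl R s (Finsupp.single (n + k) (s ^ k * r)) =
        Finsupp.single (n + k) (s ^ k * r) - Finsupp.single (n + (k + 1)) (s ^ (k + 1) * r) := by
      rw [dl_single]
      ring_nf
    have := Submodule.add_mem _ ih (LinearMap.mem_range_self (dl R s) (Finsupp.single (n + k) (s ^ k * r)))
    rw [h2] at this
    convert this using 1
    abel

lemma εl_range (x : ℕ →₀ R) (hx : x ∈ LinearMap.range (dl R s)) : εl R s x = 0 := by
  obtain ⟨y, rfl⟩ := hx
  exact εl_dl R s y

lemma ker_le_range (c : ℕ →₀ R) (hc : εl R s c = 0) : c ∈ LinearMap.range (dl R s) := by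
  set N := c.support.sup id with hN
  set t := ∑ n ∈ c.support, c n * s ^ (N - n) with ht
  have hmem : ∀ n ∈ c.support, Finsupp.single n (c n) - Finsupp.single N (c n * s ^ (N - n))
      ∈ LinearMap.range (dl R s) := by
    intro n hn
    have hle : n ≤ N := Finset.le_sup (f := id) hn
    have := telescope R s (c n) n (N - n)
    rwa [Nat.add_sub_cancel' hle, mul_comm] at this
  have key : c - Finsupp.single N t ∈ LinearMap.range (dl R s) := by
    have hc' : c = ∑ n ∈ c.support, Finsupp.single n (c n) := (Finsupp.sum_single c).symm
    have hst : Finsupp.single N t = ∑ n ∈ c.support, Finsupp.single N (c n * s ^ (N - n)) := by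
      rw [ht]
      exact map_sum (Finsupp.lsingle (M := R) (R := R) N) _ _
    rw [hc', hst, ← Finset.sum_sub_distrib]
    exact Submodule.sum_mem _ hmem
  have hεt : εl R s (Finsupp.single N t) = 0 := by
    have := εl_range R s _ key
    rw [map_sub, hc, zero_sub, neg_eq_zero] at this
    exact this
  -- clear denominators: some power of s kills t
  rw [εl_single] at hεt
  rw [show (0 : Localization.Away s) = Localization.mk 0 1 by rw [Localization.mk_zero],
    Localization.mk_eq_mk_iff, Localization.r_iff_exists] at hεt
  obtain ⟨u, hu⟩ := hεt
  obtain ⟨k, hk⟩ := u.2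
  have hut : s ^ k * t = 0 := by
    have : (u : R) * t = 0 := by simpa using hu
    rw [← hk] at this
    exact this
  have hsingle : Finsupp.single N t ∈ LinearMap.range (dl R s) := by
    have := telescope R s t N k
    rwa [hut, Finsupp.single_zero, sub_zero] at this
  have := Submodule.add_mem _ key hsingle
  rwa [sub_add_cancel] at this

/-- The objects of the resolution. -/
def Xs : ℕ → ModuleCat R
  | 0 => ModuleCat.of R (ℕ →₀ R)
  | 1 => ModuleCat.of R (ℕ →₀ R)
  | _ + 2 => ModuleCat.of R PUnit

/-- The differentials of the resolution. -/
def ds : ∀ n : ℕ, Xs R (n + 1) ⟶ Xs R n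
  | 0 => ModuleCat.ofHom (dl R s)
  | _ + 1 => 0

/-- The free resolution of `R[1/s]`, as a chain complex. -/
def cplx : ChainComplex (ModuleCat R) ℕ :=
  ChainComplex.of (Xs R) (ds R s) (by
    intro n
    show (0 : Xs R (n + 2) ⟶ Xs R (n + 1)) ≫ ds R s n = 0
    exact Limits.zero_comp)

instance projXs : ∀ n, Projective (Xs R n)
  | 0 => ModuleCat.projective_of_free (ι := ℕ) Finsupp.basisSingleOne
  | 1 => ModuleCat.projective_of_free (ι := ℕ) Finsupp.basisSingleOne
  | (n + 2) => show Projective (ModuleCat.of R PUnit) from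
      ModuleCat.projective_of_free (ι := Empty) (Module.Basis.empty _)

lemma cplx_d_1_0 : (cplx R s).d 1 0 = (ModuleCat.ofHom (dl R s) : Xs R 1 ⟶ Xs R 0) := by
  exact ChainComplex.of_d (Xs R) (ds R s) 0

lemma cplx_exactAt_succ (n : ℕ) : (cplx R s).ExactAt (n + 1) := by
  rw [HomologicalComplex.exactAt_iff' _ (n + 2) (n + 1) n (by simp) (by simp)]
  cases n with
  | zero =>
    rw [ShortComplex.moduleCat_exact_iff]
    intro x hx
    refine ⟨0, ?_⟩
    have hx' : dl R s x = 0 := by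
      have : (cplx R s).d 1 0 x = 0 := hx
      rwa [cplx_d_1_0] at this
    have : x = 0 := by
      apply dl_injective R s
      exact hx'.trans (map_zero (dl R s)).symm
    simp [this]
  | succ m =>
    apply ShortComplex.exact_of_isZero_X₂
    exact ModuleCat.isZero_of_subsingleton (ModuleCat.of R PUnit)

/-- The augmented two-term complex as a short complex. -/
def SC : ShortComplex (ModuleCat R) :=
  ShortComplex.mk (show Xs R 1 ⟶ Xs R 0 from ModuleCat.ofHom (dl R s))
    (show Xs R 0 ⟶ ModuleCat.of R (Localization.Away s) from ModuleCat.ofHom (εl R s))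
    (by ext c; exact εl_dl R s c)

lemma SC_exact : (SC R s).Exact := by
  rw [ShortComplex.moduleCat_exact_iff]
  intro x hx
  exact ker_le_range R s x hx

lemma SC_epi : Epi (SC R s).g :=
  (ModuleCat.epi_iff_surjective _).2 (εl_surjective R s)

/-- The free resolution of `R[1/s]`, as a projective resolution. -/
def res : CategoryTheory.ProjectiveResolution (ModuleCat.of R (Localization.Away s)) where
  complex := cplx R s
  projective n := projXs R n
  π := (ChainComplex.toSingle₀Equiv _ _).symm ⟨(ModuleCat.ofHom (εl R s) : Xs R 0 ⟶ ModuleCat.of R (Localization.Away s)), by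
    rw [cplx_d_1_0]
    ext c
    exact εl_dl R s c⟩
  quasiIso := ⟨fun n => by
    cases n with
    | zero =>
      rw [ChainComplex.quasiIsoAt₀_iff, ShortComplex.quasiIso_iff_of_zeros']
      · refine (ShortComplex.exact_and_epi_g_iff_of_iso
          (ShortComplex.isoMk (Iso.refl _) (Iso.refl _) (Iso.refl _) ?_ ?_)).2
          ⟨SC_exact R s, SC_epi R s⟩
        · simp [SC, cplx_d_1_0]
          exact (Category.id_comp _).trans (Category.comp_id _).symm
        · simp [SC, ChainComplex.toSingle₀Equiv_symm_apply_f_zero]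
          exact (Category.id_comp _).trans (Category.comp_id _).symm
      all_goals rfl
    | succ n =>
      rw [quasiIsoAt_iff_exactAt']
      · apply cplx_exactAt_succ
      · apply ChainComplex.exactAt_succ_single_obj⟩

end Ext1Aux

end Ext1Aux

open Ext1Aux

/-- For a commutative ring `R`, an element `s ∈ R`, and an `R`-module `C`,
one has `Ext¹_R(R[s⁻¹], C) = 0` if and only if every infinite system of equations
`bₙ - s·bₙ₊₁ = aₙ` (n ≥ 0) has a solution in `C`. -/
theorem ext1_localizationAway_vanishes_iff_equation_system_solvable
    (R : Type) [CommRing R] (s : R) (C : Type) [AddCommGroup C] [Module R C] :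
    Subsingleton (((Ext R (ModuleCat R) 1).obj
        (op (ModuleCat.of R (Localization.Away s)))).obj (ModuleCat.of R C)) ↔
      ∀ a : ℕ → C, ∃ b : ℕ → C, ∀ n : ℕ, b n - s • b (n + 1) = a n := by
  classical
  set Y := ModuleCat.of R C with hY
  set P := res R s with hP
  set K := ChainComplex.linearYonedaObj P.complex R Y with hK
  rw [Equiv.subsingleton_congr ((P.isoExt 1 Y).toLinearEquiv.toEquiv)]
  have h1 : Subsingleton (K.homology 1) ↔ K.ExactAt 1 := by
    rw [HomologicalComplex.exactAt_iff_isZero_homology]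
    constructor
    · intro h; exact ModuleCat.isZero_of_subsingleton _
    · intro h
      refine ⟨fun x y => ?_⟩
      have h0 : 𝟙 (K.homology 1) = 0 := h.eq_of_src _ _
      have h0 : 𝟙 (K.homology 1) = (0 : K.homology 1 ⟶ K.homology 1) := h.eq_of_src _ _
      have hz : ∀ z : K.homology 1, z = 0 := fun z =>
        congrArg (fun g : K.homology 1 ⟶ K.homology 1 => g.hom z) h0
      rw [hz x, hz y]
  rw [h1, HomologicalComplex.exactAt_iff' K 0 1 2 (by simp) (by simp),
    ShortComplex.moduleCat_exact_iff]
  haveI hsub2 : Subsingleton ((HomologicalComplex.sc' K 0 1 2).X₃) :=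
    show Subsingleton ((ModuleCat.of R PUnit : ModuleCat R) ⟶ Y) from
      ⟨fun f g => ModuleCat.hom_ext (LinearMap.ext fun x => by
        rw [Subsingleton.elim x 0, map_zero, map_zero])⟩
  constructor
  · intro h a
    obtain ⟨f, hf⟩ := h (ModuleCat.ofHom (Finsupp.lsum R fun n => LinearMap.toSpanSingleton R C (a n)))
      (Subsingleton.elim _ _)
    set f' : (ℕ →₀ R) →ₗ[R] C := ModuleCat.Hom.hom (show Xs R 0 ⟶ Y from f) with hf'
    have hstep : (HomologicalComplex.sc' K 0 1 2).f f = ModuleCat.ofHom (f'.comp (dl R s)) := by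
      show K.d 0 1 f = _
      show P.complex.d 1 0 ≫ f = _
      rw [show P.complex.d 1 0 = (show Xs R 1 ⟶ Xs R 0 from ModuleCat.ofHom (dl R s)) from cplx_d_1_0 R s]
      rfl
    have hf2 : f'.comp (dl R s) = (Finsupp.lsum R fun n => LinearMap.toSpanSingleton R C (a n)) :=
      congrArg ModuleCat.Hom.hom (hstep.symm.trans hf)
    refine ⟨fun n => f' (Finsupp.single n 1), fun n => ?_⟩
    have := congrArg (fun (g : (ℕ →₀ R) →ₗ[R] C) => g (Finsupp.single n 1)) hf2
    simp only [LinearMap.comp_apply, Finsupp.lsum_single, LinearMap.toSpanSingleton_apply,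
      one_smul, dl_single, map_sub, mul_one] at this
    rw [← this]
    rw [show f' (Finsupp.single (n + 1) s) = s • f' (Finsupp.single (n + 1) (1 : R)) by
      rw [← map_smul, Finsupp.smul_single, smul_eq_mul, mul_one]]
  · intro h x hx
    set x' : (ℕ →₀ R) →ₗ[R] C := ModuleCat.Hom.hom (show Xs R 1 ⟶ Y from x) with hx'
    set a : ℕ → C := fun n => x' (Finsupp.single n 1) with ha
    obtain ⟨b, hb⟩ := h a
    refine ⟨ModuleCat.ofHom (Finsupp.lsum R fun n => LinearMap.toSpanSingleton R C (b n) :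
      (ℕ →₀ R) →ₗ[R] C), ?_⟩
    show K.d 0 1 _ = x
    show (P.complex.d 1 0 ≫ _ : Xs R 1 ⟶ Y) = x
    rw [show P.complex.d 1 0 = (show Xs R 1 ⟶ Xs R 0 from ModuleCat.ofHom (dl R s)) from cplx_d_1_0 R s]
    apply ModuleCat.hom_ext
    apply Finsupp.lhom_ext'
    intro n
    apply LinearMap.ext_ring
    show (Finsupp.lsum R fun n => LinearMap.toSpanSingleton R C (b n)) (dl R s (Finsupp.single n 1))
      = x' (Finsupp.single n 1)
    rw [dl_single, map_sub]
    simp only [Finsupp.lsum_single, LinearMap.toSpanSingleton_apply, one_smul, mul_one]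
    exact hb n
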